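/- arXiv:2404.10216 — 4 statements merged into one kernel-verified Lean document; each statement's English description precedes it below -/
import Mathlib

section
/- Handle sliding and exchanging handle ends commute: for any set system D = (E, F) and distinct a, b ∈ E, one has (D̃_ab)'_ab = (D'_ab)̃_ab, and this common set system D̃'_ab has feasible family F Δ {F ∪ {a,b} : F ∈ F and F ⊆ E \ {a,b}} Δ {F ∪ {a} : F ∪ {b} ∈ F and F ⊆ E \ {a,b}}. -/
open scoped symmDiff

namespace SetSystem

variable {α : Type*} [DecidableEq α]

/-- The family `{F ∪ {a} : F ∪ {b} ∈ 𝓕 and F ⊆ E \ {a,b}}` used in handle sliding. -/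
def slideSet (E : Finset α) (a b : α) (𝓕 : Finset (Finset α)) : Finset (Finset α) :=
  ((E \ {a, b}).powerset.filter (fun X => insert b X ∈ 𝓕)).image (fun X => insert a X)

/-- Handle sliding of `a` over `b`: `𝓕 ∆ {F ∪ {a} : F ∪ {b} ∈ 𝓕, F ⊆ E \ {a,b}}`. -/
def handleSlide (E : Finset α) (a b : α) (𝓕 : Finset (Finset α)) : Finset (Finset α) :=
  𝓕 ∆ slideSet E a b 𝓕

/-- The family `{F ∪ {a,b} : F ∈ 𝓕 and F ⊆ E \ {a,b}}` used in exchanging handle ends. -/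
def exchSet (E : Finset α) (a b : α) (𝓕 : Finset (Finset α)) : Finset (Finset α) :=
  ((E \ {a, b}).powerset.filter (fun X => X ∈ 𝓕)).image (fun X => insert a (insert b X))

/-- Exchanging handle ends of `a` and `b`: `𝓕 ∆ {F ∪ {a,b} : F ∈ 𝓕, F ⊆ E \ {a,b}}`. -/
def exchEnds (E : Finset α) (a b : α) (𝓕 : Finset (Finset α)) : Finset (Finset α) :=
  𝓕 ∆ exchSet E a b 𝓕

/-- The twist of a set system by `A`: feasible sets become `A ∆ X` for `X` feasible. -/
def twist (A : Finset α) (𝓕 : Finset (Finset α)) : Finset (Finset α) :=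
  𝓕.image (fun X => A ∆ X)

/-- `r(D_max)`: size of a largest feasible set. -/
def rmax (𝓕 : Finset (Finset α)) : ℕ := 𝓕.sup Finset.card

/-- `r(D_min)`: size of a smallest feasible set (0 for the empty family). -/
def rmin (𝓕 : Finset (Finset α)) : ℕ := ((𝓕.image Finset.card).min).untopD 0

/-- The width `w(D) = r(D_max) - r(D_min)`. -/
def width (𝓕 : Finset (Finset α)) : ℕ := rmax 𝓕 - rmin 𝓕

/-- The twist polynomial `∂ω_D(z) = Σ_{A ⊆ E} z^{w(D*A)}`. -/
noncomputable def twistPoly (E : Finset α) (𝓕 : Finset (Finset α)) : Polynomial ℤ :=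
  ∑ A ∈ E.powerset, Polynomial.X ^ width (twist A 𝓕)

/-- A (proper) delta-matroid: a nonempty family satisfying the symmetric exchange axiom. -/
def IsDeltaMatroid (𝓕 : Finset (Finset α)) : Prop :=
  𝓕.Nonempty ∧ ∀ X ∈ 𝓕, ∀ Y ∈ 𝓕, ∀ u ∈ X ∆ Y, ∃ v ∈ X ∆ Y, X ∆ ({u, v} : Finset α) ∈ 𝓕

/-- A set system on ground set `E` is binary if some twist of it equals `D(C)` for a
symmetric matrix `C` over `GF(2)` indexed by `E`: the feasible sets of `D(C)` are those
`B ⊆ E` whose principal submatrix `C[B]` is nonsingular (with `C[∅]` nonsingular). -/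
def IsBinary (E : Finset α) (𝓕 : Finset (Finset α)) : Prop :=
  ∃ A ⊆ E, ∃ C : α → α → ZMod 2, (∀ i j, C i j = C j i) ∧
    ∀ B : Finset α, B ∈ twist A 𝓕 ↔
      B ⊆ E ∧ (Matrix.of fun i j : ↥B => C i.1 j.1).det ≠ 0

/-- `e` is a loop: it lies in no feasible set. -/
def IsLoop (𝓕 : Finset (Finset α)) (e : α) : Prop := ∀ X ∈ 𝓕, e ∉ X

/-- `e` is a coloop: it lies in every feasible set. -/
def IsColoop (𝓕 : Finset (Finset α)) (e : α) : Prop := ∀ X ∈ 𝓕, e ∈ X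

/-- Deletion of `e` (acting on the feasible family). -/
def deleteElem (𝓕 : Finset (Finset α)) (e : α) : Finset (Finset α) :=
  if ∀ X ∈ 𝓕, e ∈ X then 𝓕.image (fun X => X.erase e)
  else 𝓕.filter (fun X => e ∉ X)

/-- Contraction of `e`: `D / e = (D * {e}) \ e`. -/
def contractElem (𝓕 : Finset (Finset α)) (e : α) : Finset (Finset α) :=
  deleteElem (twist {e} 𝓕) e


/-- Handle sliding and exchanging handle ends commute, and the common
result has feasible family `𝓕 ∆ {F ∪ {a,b} : F ∈ 𝓕, F ⊆ E\{a,b}} ∆ {F ∪ {a} : F ∪ {b} ∈ 𝓕, F ⊆ E\{a,b}}`. -/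
theorem handleSlide_exchEnds_comm (E : Finset α) (𝓕 : Finset (Finset α))
    (h𝓕 : ∀ X ∈ 𝓕, X ⊆ E) (a b : α) (ha : a ∈ E) (hb : b ∈ E) (hab : a ≠ b) :
    handleSlide E a b (exchEnds E a b 𝓕) = exchEnds E a b (handleSlide E a b 𝓕) ∧
    handleSlide E a b (exchEnds E a b 𝓕) = 𝓕 ∆ exchSet E a b 𝓕 ∆ slideSet E a b 𝓕 := by
  have mem_exch : ∀ Y ∈ exchSet E a b 𝓕, a ∈ Y := by
    intro Y hY
    simp only [exchSet, Finset.mem_image] at hY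
    obtain ⟨X, _, rfl⟩ := hY
    exact Finset.mem_insert_self a _
  have mem_slide : ∀ Y ∈ slideSet E a b 𝓕, a ∈ Y := by
    intro Y hY
    simp only [slideSet, Finset.mem_image] at hY
    obtain ⟨X, _, rfl⟩ := hY
    exact Finset.mem_insert_self a _
  have key1 : slideSet E a b (exchEnds E a b 𝓕) = slideSet E a b 𝓕 := by
    unfold exchEnds slideSet
    congr 1
    apply Finset.filter_congr
    intro X hX
    simp only [Finset.mem_powerset] at hX
    have haX : a ∉ insert b X := by
      simp only [Finset.mem_insert]
      rintro (rfl | h)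
      · exact hab rfl
      · have := hX h
        simp at this
    have hnot : insert b X ∉ exchSet E a b 𝓕 := fun h => haX (mem_exch _ h)
    simp [Finset.mem_symmDiff, hnot]
  have key2 : exchSet E a b (handleSlide E a b 𝓕) = exchSet E a b 𝓕 := by
    unfold handleSlide exchSet
    congr 1
    apply Finset.filter_congr
    intro X hX
    simp only [Finset.mem_powerset] at hX
    have haX : a ∉ X := by
      intro h
      have := hX h
      simp at this
    have hnot : X ∉ slideSet E a b 𝓕 := fun h => haX (mem_slide _ h)
    simp [Finset.mem_symmDiff, hnot]
  have e1 : handleSlide E a b (exchEnds E a b 𝓕) = 𝓕 ∆ exchSet E a b 𝓕 ∆ slideSet E a b 𝓕 := by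
    unfold handleSlide
    rw [key1]
    unfold exchEnds
    rfl
  have e2 : exchEnds E a b (handleSlide E a b 𝓕) = 𝓕 ∆ slideSet E a b 𝓕 ∆ exchSet E a b 𝓕 := by
    unfold exchEnds
    rw [key2]
    unfold handleSlide
    rfl
  refine ⟨?_, e1⟩
  rw [e1, e2, symmDiff_right_comm]

end SetSystem
end

section
/- Let D = (E, F) be a proper set system, a, b ∈ E distinct, and A ⊆ E with |A ∩ {a,b}| equal to 0 or 2, and assume D̃_ab is proper. Then the minimum sizes of feasible sets of the twists agree, r((D * A)_min) = r((D̃_ab * A)_min), and likewise the maximum sizes agree, r((D * A)_max) = r((D̃_ab * A)_max). -/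
open scoped symmDiff

namespace SetSystem

variable {α : Type*} [DecidableEq α]

lemma card_symmDiff_singleton (s : Finset α) (a : α) :
    (s ∆ ({a} : Finset α)).card = if a ∈ s then s.card - 1 else s.card + 1 := by
  by_cases h : a ∈ s
  · have : s ∆ ({a} : Finset α) = s.erase a := by
      ext x
      simp only [Finset.mem_symmDiff, Finset.mem_singleton, Finset.mem_erase]
      constructor
      · rintro (⟨hx, hne⟩ | ⟨rfl, hx⟩) <;> tauto
      · rintro ⟨hne, hx⟩; exact Or.inl ⟨hx, hne⟩
    rw [this, Finset.card_erase_of_mem h, if_pos h]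
  · have : s ∆ ({a} : Finset α) = insert a s := by
      ext x
      simp only [Finset.mem_symmDiff, Finset.mem_singleton, Finset.mem_insert]
      constructor
      · rintro (⟨hx, hne⟩ | ⟨rfl, hx⟩) <;> tauto
      · rintro (rfl | hx)
        · exact Or.inr ⟨rfl, h⟩
        · exact Or.inl ⟨hx, fun hxa => h (hxa ▸ hx)⟩
    rw [this, Finset.card_insert_of_notMem h, if_neg h]

lemma insert_eq_symmDiff_singleton {X : Finset α} {a : α} (ha : a ∉ X) :
    insert a X = X ∆ ({a} : Finset α) := by
  ext x
  simp only [Finset.mem_insert, Finset.mem_symmDiff, Finset.mem_singleton]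
  constructor
  · rintro (rfl | hx)
    · exact Or.inr ⟨rfl, ha⟩
    · exact Or.inl ⟨hx, fun hxa => ha (hxa ▸ hx)⟩
  · rintro (⟨hx, _⟩ | ⟨rfl, _⟩) <;> tauto

lemma key_card {A : Finset α} {a b : α}
    (hA : (a ∈ A ∧ b ∈ A) ∨ (a ∉ A ∧ b ∉ A)) {X : Finset α} (haX : a ∉ X) (hbX : b ∉ X) :
    (A ∆ insert a X).card = (A ∆ insert b X).card := by
  rw [insert_eq_symmDiff_singleton haX, insert_eq_symmDiff_singleton hbX,
    ← symmDiff_assoc, ← symmDiff_assoc, card_symmDiff_singleton, card_symmDiff_singleton]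
  have hma : a ∈ A ∆ X ↔ a ∈ A := by
    simp only [Finset.mem_symmDiff]; tauto
  have hmb : b ∈ A ∆ X ↔ b ∈ A := by
    simp only [Finset.mem_symmDiff]; tauto
  rcases hA with ⟨h1, h2⟩ | ⟨h1, h2⟩
  · rw [if_pos (hma.mpr h1), if_pos (hmb.mpr h2)]
  · rw [if_neg (fun h => h1 (hma.mp h)), if_neg (fun h => h2 (hmb.mp h))]

lemma card_image_twist_subset (A : Finset α) {𝓖 𝓗 : Finset (Finset α)}
    (h : ∀ Y ∈ 𝓖, ∃ Z ∈ 𝓗, (A ∆ Z).card = (A ∆ Y).card) :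
    (twist A 𝓖).image Finset.card ⊆ (twist A 𝓗).image Finset.card := by
  intro n hn
  simp only [twist, Finset.image_image, Finset.mem_image, Function.comp] at hn ⊢
  obtain ⟨Y, hY, rfl⟩ := hn
  obtain ⟨Z, hZ, hc⟩ := h Y hY
  exact ⟨Z, hZ, hc⟩

lemma mem_slideSet {E : Finset α} {a b : α} {𝓕 : Finset (Finset α)} {Y : Finset α}
    (hY : Y ∈ slideSet E a b 𝓕) :
    ∃ X, a ∉ X ∧ b ∉ X ∧ Y = insert a X ∧ insert b X ∈ 𝓕 := by
  simp only [slideSet, Finset.mem_image, Finset.mem_filter, Finset.mem_powerset] at hY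
  obtain ⟨X, ⟨hXsub, hXb⟩, rfl⟩ := hY
  refine ⟨X, fun h => ?_, fun h => ?_, rfl, hXb⟩
  · have := hXsub h; simp at this
  · have := hXsub h; simp at this

/-- If `|A ∩ {a,b}|` is `0` or `2`, then twisting by `A` gives equal minimum
and equal maximum feasible-set sizes for `D` and the handle-slid system `D̃_ab`. -/
theorem rmin_rmax_twist_handleSlide (E : Finset α) (𝓕 : Finset (Finset α))
    (h𝓕 : ∀ X ∈ 𝓕, X ⊆ E) (hprop : 𝓕.Nonempty)
    (a b : α) (ha : a ∈ E) (hb : b ∈ E) (hab : a ≠ b)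
    (hprop' : (handleSlide E a b 𝓕).Nonempty)
    (A : Finset α) (hA : A ⊆ E)
    (hcard : (A ∩ {a, b}).card = 0 ∨ (A ∩ {a, b}).card = 2) :
    rmin (twist A 𝓕) = rmin (twist A (handleSlide E a b 𝓕)) ∧
    rmax (twist A 𝓕) = rmax (twist A (handleSlide E a b 𝓕)) := by
  have hA' : (a ∈ A ∧ b ∈ A) ∨ (a ∉ A ∧ b ∉ A) := by
    rcases hcard with h | h
    · right
      rw [Finset.card_eq_zero] at h
      constructor
      · intro hm; exact absurd (Finset.eq_empty_iff_forall_notMem.mp h a) (by simp [hm])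
      · intro hm; exact absurd (Finset.eq_empty_iff_forall_notMem.mp h b) (by simp [hm])
    · left
      have hsub : A ∩ {a, b} ⊆ ({a, b} : Finset α) := Finset.inter_subset_right
      have hcard2 : ({a, b} : Finset α).card = 2 := by
        rw [Finset.card_insert_of_notMem (by simpa using hab), Finset.card_singleton]
      have heq : A ∩ {a, b} = ({a, b} : Finset α) :=
        Finset.eq_of_subset_of_card_le hsub (by rw [hcard2, h])
      constructor
      · have : a ∈ A ∩ {a, b} := by rw [heq]; simp
        exact (Finset.mem_inter.mp this).1
      · have : b ∈ A ∩ {a, b} := by rw [heq]; simp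
        exact (Finset.mem_inter.mp this).1
  have himg : (twist A 𝓕).image Finset.card
      = (twist A (handleSlide E a b 𝓕)).image Finset.card := by
    apply Finset.Subset.antisymm
    · apply card_image_twist_subset
      intro Y hY
      by_cases hYS : Y ∈ slideSet E a b 𝓕
      · obtain ⟨X, haX, hbX, rfl, hbmem⟩ := mem_slideSet hYS
        refine ⟨insert b X, ?_, key_card (by tauto) hbX haX⟩
        rw [handleSlide, Finset.mem_symmDiff]
        left
        refine ⟨hbmem, fun hmem => ?_⟩
        obtain ⟨X', _, hbX', heq, _⟩ := mem_slideSet hmem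
        exact hbX' (by have : b ∈ insert b X := by simp
                       rw [heq, Finset.mem_insert] at this
                       rcases this with h | h
                       · exact absurd h.symm hab
                       · exact h)
      · exact ⟨Y, by rw [handleSlide, Finset.mem_symmDiff]; left; exact ⟨hY, hYS⟩, rfl⟩
    · apply card_image_twist_subset
      intro Y hY
      rw [handleSlide, Finset.mem_symmDiff] at hY
      rcases hY with ⟨hY, _⟩ | ⟨hYS, _⟩
      · exact ⟨Y, hY, rfl⟩
      · obtain ⟨X, haX, hbX, rfl, hbmem⟩ := mem_slideSet hYS
        exact ⟨insert b X, hbmem, key_card (by tauto) hbX haX⟩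
  constructor
  · unfold rmin; rw [himg]
  · have hsup : ∀ 𝓖 : Finset (Finset α), rmax 𝓖 = (𝓖.image Finset.card).sup id := by
      intro 𝓖
      rw [rmax, Finset.sup_image]
      rfl
    rw [hsup, hsup, himg]

end SetSystem
end

section
/- Let D = (E, F) be a proper set system, a, b ∈ E distinct, and A ⊆ E with |A ∩ {a,b}| = 1, and assume D'_ab is proper. Then the twists of D and of D'_ab by A have equal widths: w(D * A) = w(D'_ab * A). -/
open scoped symmDiff

namespace SetSystem

variable {α : Type*} [DecidableEq α]

lemma card_symmDiff_insert_aux {A X : Finset α} {a b : α}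
    (haA : a ∈ A) (hbA : b ∉ A) (hXa : a ∉ X) (hXb : b ∉ X) (hab : a ≠ b) :
    (A ∆ (insert a (insert b X))).card = (A ∆ X).card := by
  have hZa : a ∈ A ∆ X := by simp [Finset.mem_symmDiff, haA, hXa]
  have hZb : b ∉ A ∆ X := by simp [Finset.mem_symmDiff, hbA, hXb]
  have hset : A ∆ (insert a (insert b X)) = insert b ((A ∆ X).erase a) := by
    ext x
    by_cases hxa : x = a <;> by_cases hxb : x = b <;>
      simp_all [Finset.mem_symmDiff, Finset.mem_insert, Finset.mem_erase] <;> tauto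
  rw [hset, Finset.card_insert_of_notMem (by simp [hZb]),
    Finset.card_erase_add_one hZa]

lemma card_symmDiff_insert {A X : Finset α} {a b : α}
    (hcard : (A ∩ {a, b}).card = 1) (hXa : a ∉ X) (hXb : b ∉ X) (hab : a ≠ b) :
    (A ∆ (insert a (insert b X))).card = (A ∆ X).card := by
  obtain ⟨x, hx⟩ := Finset.card_eq_one.mp hcard
  have hxab : x ∈ A ∧ (x = a ∨ x = b) := by
    have := hx ▸ Finset.mem_singleton_self x
    simpa [Finset.mem_inter, Finset.mem_insert] using this
  rcases hxab.2 with rfl | rfl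
  · have hbA : b ∉ A := fun hbA => hab (by
      have h2 : b ∈ A ∩ {x, b} := by simp [hbA]
      rw [hx] at h2
      exact (Finset.mem_singleton.mp h2).symm)
    exact card_symmDiff_insert_aux hxab.1 hbA hXa hXb hab
  · have haA : a ∉ A := fun haA => hab (by
      have h2 : a ∈ A ∩ {a, x} := by simp [haA]
      rw [hx] at h2
      exact Finset.mem_singleton.mp h2)
    have hins : insert a (insert x X) = insert x (insert a X) := by
      ext y; simp [Finset.mem_insert]; tauto
    rw [hins]
    exact card_symmDiff_insert_aux hxab.1 haA hXb hXa hab.symm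

lemma mem_exchSet_iff {E : Finset α} {a b : α} {𝓕 : Finset (Finset α)} {Y : Finset α} :
    Y ∈ exchSet E a b 𝓕 ↔
      ∃ X, X ⊆ E \ {a, b} ∧ X ∈ 𝓕 ∧ insert a (insert b X) = Y := by
  simp [exchSet, Finset.mem_image, Finset.mem_filter, Finset.mem_powerset]
  tauto

lemma image_card_twist_exchEnds (E : Finset α) (𝓕 : Finset (Finset α))
    (a b : α) (hab : a ≠ b)
    (A : Finset α) (hcard : (A ∩ {a, b}).card = 1) :
    (twist A 𝓕).image Finset.card = (twist A (exchEnds E a b 𝓕)).image Finset.card := by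
  ext n
  simp only [twist, Finset.image_image, Finset.mem_image, Function.comp]
  constructor
  · rintro ⟨X, hX, rfl⟩
    by_cases hXe : X ∈ exchEnds E a b 𝓕
    · exact ⟨X, hXe, rfl⟩
    · have hXS : X ∈ exchSet E a b 𝓕 := by
        by_contra hXS
        exact hXe (Finset.mem_symmDiff.mpr (Or.inl ⟨hX, hXS⟩))
      obtain ⟨X₀, hX₀E, hX₀F, hX₀eq⟩ := mem_exchSet_iff.mp hXS
      have hX₀a : a ∉ X₀ := fun h => by simpa using (Finset.mem_sdiff.mp (hX₀E h)).2
      have hX₀b : b ∉ X₀ := fun h => by simpa using (Finset.mem_sdiff.mp (hX₀E h)).2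
      refine ⟨X₀, Finset.mem_symmDiff.mpr (Or.inl ⟨hX₀F, ?_⟩), ?_⟩
      · intro hmem
        obtain ⟨X₁, _, _, hX₁eq⟩ := mem_exchSet_iff.mp hmem
        exact hX₀a (hX₁eq ▸ Finset.mem_insert_self a _)
      · rw [← hX₀eq, card_symmDiff_insert hcard hX₀a hX₀b hab]
  · rintro ⟨Y, hY, rfl⟩
    rcases Finset.mem_symmDiff.mp hY with ⟨hYF, _⟩ | ⟨hYS, _⟩
    · exact ⟨Y, hYF, rfl⟩
    · obtain ⟨X₀, hX₀E, hX₀F, hX₀eq⟩ := mem_exchSet_iff.mp hYS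
      have hX₀a : a ∉ X₀ := fun h => by simpa using (Finset.mem_sdiff.mp (hX₀E h)).2
      have hX₀b : b ∉ X₀ := fun h => by simpa using (Finset.mem_sdiff.mp (hX₀E h)).2
      exact ⟨X₀, hX₀F, by rw [← hX₀eq, card_symmDiff_insert hcard hX₀a hX₀b hab]⟩

lemma width_eq_of_image_card_eq {𝓕 𝓖 : Finset (Finset α)}
    (h : 𝓕.image Finset.card = 𝓖.image Finset.card) : width 𝓕 = width 𝓖 := by
  have hmax : rmax 𝓕 = rmax 𝓖 := by
    unfold rmax
    have key : ∀ 𝓗 : Finset (Finset α), 𝓗.sup Finset.card = (𝓗.image Finset.card).sup id := by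
      intro 𝓗
      rw [Finset.sup_image]
      rfl
    rw [key, key, h]
  have hmin : rmin 𝓕 = rmin 𝓖 := by unfold rmin; rw [h]
  unfold width
  rw [hmax, hmin]

/-- If `|A ∩ {a,b}| = 1`, then twisting by `A` gives equal widths for `D`
and the system `D'_ab` obtained by exchanging handle ends. -/
theorem width_twist_exchEnds (E : Finset α) (𝓕 : Finset (Finset α))
    (h𝓕 : ∀ X ∈ 𝓕, X ⊆ E) (hprop : 𝓕.Nonempty)
    (a b : α) (ha : a ∈ E) (hb : b ∈ E) (hab : a ≠ b)
    (hprop' : (exchEnds E a b 𝓕).Nonempty)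
    (A : Finset α) (hA : A ⊆ E) (hcard : (A ∩ {a, b}).card = 1) :
    width (twist A 𝓕) = width (twist A (exchEnds E a b 𝓕)) :=
  width_eq_of_image_card_eq (image_card_twist_exchEnds E 𝓕 a b hab A hcard)

end SetSystem
end

section
/- Let D = (E, F) be a proper set system, a, b ∈ E distinct, and A ⊆ E with |A ∩ {a,b}| = 1, and assume D'_ab is proper. Then the minimum sizes of feasible sets of the twists agree, r((D * A)_min) = r((D'_ab * A)_min), and likewise the maximum sizes agree, r((D * A)_max) = r((D'_ab * A)_max). -/
open scoped symmDiff

namespace SetSystem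

variable {α : Type*} [DecidableEq α]

lemma key_card_s10 (A F : Finset α) (a b : α) (hab : a ≠ b)
    (haA : a ∈ A) (hbA : b ∉ A) (haF : a ∉ F) (hbF : b ∉ F) :
    (A ∆ (insert a (insert b F))).card = (A ∆ F).card := by
  have h1 : A ∆ (insert a (insert b F)) = insert b ((A ∆ F).erase a) := by
    ext x
    simp only [Finset.mem_symmDiff, Finset.mem_insert, Finset.mem_erase]
    rcases eq_or_ne x a with rfl | hxa
    · simp_all
    rcases eq_or_ne x b with rfl | hxb
    · simp_all
    · simp_all
  rw [h1, Finset.card_insert_of_notMem, Finset.card_erase_add_one]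
  · simp [Finset.mem_symmDiff, haA, haF]
  · simp [Finset.mem_symmDiff, hbA, hbF, hab.symm]

lemma key_card' (A F : Finset α) (a b : α) (hab : a ≠ b)
    (hcard : (A ∩ {a, b}).card = 1) (haF : a ∉ F) (hbF : b ∉ F) :
    (A ∆ (insert a (insert b F))).card = (A ∆ F).card := by
  have hins : insert a (insert b F) = insert b (insert a F) := by
    ext x; simp; tauto
  by_cases haA : a ∈ A <;> by_cases hbA : b ∈ A
  · exfalso
    have : A ∩ {a, b} = {a, b} := by
      ext x; simp only [Finset.mem_inter, Finset.mem_insert, Finset.mem_singleton]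
      constructor
      · tauto
      · rintro (rfl | rfl) <;> simp_all
    rw [this, Finset.card_insert_of_notMem (by simp [hab]), Finset.card_singleton] at hcard
    omega
  · exact key_card_s10 A F a b hab haA hbA haF hbF
  · rw [hins]; exact key_card_s10 A F b a hab.symm hbA haA hbF haF
  · exfalso
    have : A ∩ {a, b} = ∅ := by
      ext x; simp only [Finset.mem_inter, Finset.mem_insert, Finset.mem_singleton,
        Finset.notMem_empty, iff_false, not_and]
      rintro hx (rfl | rfl) <;> tauto
    rw [this] at hcard; simp at hcard

lemma cards_eq (E : Finset α) (𝓕 : Finset (Finset α)) (a b : α) (hab : a ≠ b)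
    (A : Finset α) (hcard : (A ∩ {a, b}).card = 1) :
    ((twist A 𝓕).image Finset.card) = ((twist A (exchEnds E a b 𝓕)).image Finset.card) := by
  have hmemE : ∀ X ∈ exchSet E a b 𝓕,
      ∃ F ∈ 𝓕, a ∉ F ∧ b ∉ F ∧ X = insert a (insert b F) := by
    intro X hX
    simp only [exchSet, Finset.mem_image, Finset.mem_filter, Finset.mem_powerset] at hX
    obtain ⟨F, ⟨hFE, hF⟩, rfl⟩ := hX
    refine ⟨F, hF, ?_, ?_, rfl⟩
    · intro h; have := hFE h; simp at this
    · intro h; have := hFE h; simp at this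
  have haE : ∀ X ∈ exchSet E a b 𝓕, a ∈ X := by
    intro X hX; obtain ⟨F, _, _, _, rfl⟩ := hmemE X hX; simp
  apply Finset.Subset.antisymm <;> intro n hn <;>
    simp only [twist, Finset.image_image, Finset.mem_image, Function.comp] at hn ⊢ <;>
    obtain ⟨X, hX, rfl⟩ := hn
  · by_cases hX' : X ∈ exchEnds E a b 𝓕
    · exact ⟨X, hX', rfl⟩
    · have hXe : X ∈ exchSet E a b 𝓕 := by
        simp only [exchEnds, Finset.mem_symmDiff] at hX'
        push_neg at hX'
        exact hX'.1 hX
      obtain ⟨F, hF, haF, hbF, rfl⟩ := hmemE X hXe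
      refine ⟨F, ?_, (key_card' A F a b hab hcard haF hbF).symm⟩
      simp only [exchEnds, Finset.mem_symmDiff]
      left
      exact ⟨hF, fun h => haF (haE F h)⟩
  · simp only [exchEnds, Finset.mem_symmDiff] at hX
    rcases hX with ⟨hX, _⟩ | ⟨hXe, hXn⟩
    · exact ⟨X, hX, rfl⟩
    · obtain ⟨F, hF, haF, hbF, rfl⟩ := hmemE _ hXe
      exact ⟨F, hF, (key_card' A F a b hab hcard haF hbF).symm⟩


/-- If `|A ∩ {a,b}| = 1`, then twisting by `A` gives equal minimum and equal
maximum feasible-set sizes for `D` and the system `D'_ab`. -/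
theorem rmin_rmax_twist_exchEnds (E : Finset α) (𝓕 : Finset (Finset α))
    (h𝓕 : ∀ X ∈ 𝓕, X ⊆ E) (hprop : 𝓕.Nonempty)
    (a b : α) (ha : a ∈ E) (hb : b ∈ E) (hab : a ≠ b)
    (hprop' : (exchEnds E a b 𝓕).Nonempty)
    (A : Finset α) (hA : A ⊆ E) (hcard : (A ∩ {a, b}).card = 1) :
    rmin (twist A 𝓕) = rmin (twist A (exchEnds E a b 𝓕)) ∧
    rmax (twist A 𝓕) = rmax (twist A (exchEnds E a b 𝓕)) := by
  have h := cards_eq E 𝓕 a b hab A hcard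
  constructor
  · unfold rmin; rw [h]
  · unfold rmax
    rw [show ∀ G : Finset (Finset α), G.sup Finset.card = (G.image Finset.card).sup id from
      fun G => by rw [Finset.sup_image]; rfl, h, Finset.sup_image]
    rfl

end SetSystem
end
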